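/- Let h, λ ≥ 1 be coprime integers with hλ ≥ 2, let a : ℕ → ℂ be multiplicative, and let χ : ℕ → ℂ be a Dirichlet character of modulus hλ such that a(n) = χ(n) for all n ≥ 1 coprime to hλ. For each prime p dividing hλ write α(p) = ν_p(hλ), and suppose we are given: a Dirichlet character χ_p of modulus p^{α(p)} for each prime p ∣ hλ such that χ(n) = ∏_{p ∣ hλ} χ_p(n) for all n; and for each prime p ∣ hλ an integer m_p with m_p ≡ 1 (mod p^{α(p)}) and m_p ≡ p (mod hλ/p^{α(p)}). Then for all n ≥ 1: a(n) = ∏_{p ∣ hλ} χ_p(n / p^{ν_p(n)}) · a(p^{ν_p(n)}) / χ(m_p)^{ν_p(n)}, where the product runs over the prime divisors of hλ (note χ(m_p) ≠ 0 since m_p is coprime to hλ). -/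

import Mathlib

/-- A sequence `f : ℕ → ℂ` is `lam`-automatic if its `lam`-kernel is finite. -/
def IsAutomatic (lam : ℕ) (f : ℕ → ℂ) : Prop :=
  {g : ℕ → ℂ | ∃ k r : ℕ, r < lam ^ k ∧ g = fun n => f (lam ^ k * n + r)}.Finite

/-- A sequence is multiplicative if `f 1 = 1` and `f (m*n) = f m * f n` for coprime `m n ≥ 1`. -/
def IsMultiplicativeSeq (f : ℕ → ℂ) : Prop :=
  f 1 = 1 ∧ ∀ m n : ℕ, 1 ≤ m → 1 ≤ n → Nat.Coprime m n → f (m * n) = f m * f n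

/-- Eventually periodic sequence. -/
def EventuallyPeriodicSeq (f : ℕ → ℂ) : Prop :=
  ∃ d : ℕ, 1 ≤ d ∧ ∃ n₀ : ℕ, ∀ n ≥ n₀, f (n + d) = f n

/-- A Dirichlet character of modulus `k`: `k`-periodic, completely multiplicative,
and vanishing exactly at arguments not coprime to `k`. -/
def IsDirichletCharacterSeq (k : ℕ) (χ : ℕ → ℂ) : Prop :=
  (∀ n : ℕ, χ (n + k) = χ n) ∧ (∀ m n : ℕ, χ (m * n) = χ m * χ n) ∧
    (∀ n : ℕ, χ n = 0 ↔ 1 < Nat.gcd n k)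

lemma dchar_one {k : ℕ} {χ : ℕ → ℂ} (hχ : IsDirichletCharacterSeq k χ) : χ 1 = 1 := by
  obtain ⟨hper, hmul, hzero⟩ := hχ
  have h1 : χ 1 ≠ 0 := by
    intro h0
    have := (hzero 1).mp h0
    simp at this
  have h2 : χ 1 * 1 = χ 1 * χ 1 := by
    rw [mul_one]; simpa using (hmul 1 1)
  exact (mul_left_cancel₀ h1 h2).symm

lemma dchar_pow {k : ℕ} {χ : ℕ → ℂ} (hχ : IsDirichletCharacterSeq k χ) (x e : ℕ) :
    χ (x ^ e) = χ x ^ e := by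
  induction e with
  | zero => simpa using dchar_one hχ
  | succ e ih => rw [pow_succ, hχ.2.1, ih, pow_succ]

lemma dchar_add_mul {k : ℕ} {χ : ℕ → ℂ} (hχ : IsDirichletCharacterSeq k χ) (x j : ℕ) :
    χ (x + j * k) = χ x := by
  induction j with
  | zero => simp
  | succ j ih =>
      have : x + (j + 1) * k = (x + j * k) + k := by ring
      rw [this, hχ.1, ih]

lemma dchar_mod {k : ℕ} {χ : ℕ → ℂ} (hχ : IsDirichletCharacterSeq k χ) (x : ℕ) :
    χ x = χ (x % k) := by
  conv_lhs => rw [← Nat.mod_add_div x k]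
  rw [show x % k + k * (x / k) = x % k + (x / k) * k by ring, dchar_add_mul hχ]

lemma dchar_modeq {k : ℕ} {χ : ℕ → ℂ} (hχ : IsDirichletCharacterSeq k χ) {x y : ℕ}
    (hxy : x ≡ y [MOD k]) : χ x = χ y := by
  rw [dchar_mod hχ x, dchar_mod hχ y, hxy]

lemma dchar_prod {k : ℕ} {χ : ℕ → ℂ} (hχ : IsDirichletCharacterSeq k χ) {ι : Type*}
    (s : Finset ι) (f : ι → ℕ) : χ (∏ i ∈ s, f i) = ∏ i ∈ s, χ (f i) := by
  classical
  induction s using Finset.induction with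
  | empty => simpa using dchar_one hχ
  | @insert _ _ hx ih => rw [Finset.prod_insert hx, Finset.prod_insert hx, hχ.2.1, ih]

lemma mult_prod {a : ℕ → ℂ} (ha : IsMultiplicativeSeq a) (s : Finset ℕ) (f : ℕ → ℕ)
    (h1 : ∀ i ∈ s, 1 ≤ f i)
    (hcop : ∀ i ∈ s, ∀ j ∈ s, i ≠ j → Nat.Coprime (f i) (f j)) :
    a (∏ i ∈ s, f i) = ∏ i ∈ s, a (f i) := by
  classical
  induction s using Finset.induction with
  | empty => simpa using ha.1
  | @insert x s hx ih =>
      rw [Finset.prod_insert hx, Finset.prod_insert hx]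
      have h1' : ∀ i ∈ s, 1 ≤ f i := fun i hi => h1 i (Finset.mem_insert_of_mem hi)
      have hprodpos : 1 ≤ ∏ i ∈ s, f i :=
        Finset.one_le_prod' h1'
      have hcopx : Nat.Coprime (f x) (∏ i ∈ s, f i) :=
        Nat.Coprime.prod_right fun i hi =>
          hcop x (Finset.mem_insert_self x s) i (Finset.mem_insert_of_mem hi)
            (fun hxi => hx (hxi ▸ hi))
      rw [ha.2 (f x) _ (h1 x (Finset.mem_insert_self x s)) hprodpos hcopx,
        ih h1' (fun i hi j hj hij =>
          hcop i (Finset.mem_insert_of_mem hi) j (Finset.mem_insert_of_mem hj) hij)]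

lemma prod_dvd_nat (s : Finset ℕ) (f : ℕ → ℕ) (n : ℕ)
    (hcop : ∀ i ∈ s, ∀ j ∈ s, i ≠ j → Nat.Coprime (f i) (f j))
    (hdvd : ∀ i ∈ s, f i ∣ n) : (∏ i ∈ s, f i) ∣ n := by
  classical
  induction s using Finset.induction with
  | empty => simpa using one_dvd n
  | @insert x s hx ih =>
      rw [Finset.prod_insert hx]
      have hcopx : Nat.Coprime (f x) (∏ i ∈ s, f i) :=
        Nat.Coprime.prod_right fun i hi =>
          hcop x (Finset.mem_insert_self x s) i (Finset.mem_insert_of_mem hi)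
            (fun hxi => hx (hxi ▸ hi))
      exact hcopx.mul_dvd_of_dvd_of_dvd (hdvd x (Finset.mem_insert_self x s))
        (ih (fun i hi j hj hij =>
            hcop i (Finset.mem_insert_of_mem hi) j (Finset.mem_insert_of_mem hj) hij)
          (fun i hi => hdvd i (Finset.mem_insert_of_mem hi)))

theorem stmt_12 (h lam : ℕ) (hh : 1 ≤ h) (hlam : 1 ≤ lam)
    (hcop : Nat.Coprime h lam) (hge : 2 ≤ h * lam)
    (a : ℕ → ℂ) (ha : IsMultiplicativeSeq a)
    (χ : ℕ → ℂ) (hχ : IsDirichletCharacterSeq (h * lam) χ)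
    (haχ : ∀ n : ℕ, 1 ≤ n → Nat.Coprime n (h * lam) → a n = χ n)
    (χp : ℕ → ℕ → ℂ)
    (hχp : ∀ p ∈ (h * lam).primeFactors,
      IsDirichletCharacterSeq (p ^ padicValNat p (h * lam)) (χp p))
    (hprod : ∀ n : ℕ, χ n = ∏ p ∈ (h * lam).primeFactors, χp p n)
    (m : ℕ → ℕ)
    (hm : ∀ p ∈ (h * lam).primeFactors,
      m p ≡ 1 [MOD p ^ padicValNat p (h * lam)] ∧
      m p ≡ p [MOD (h * lam) / p ^ padicValNat p (h * lam)]) :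
    ∀ n : ℕ, 1 ≤ n →
      a n = ∏ p ∈ (h * lam).primeFactors,
        χp p (n / p ^ padicValNat p n) * a (p ^ padicValNat p n) /
          (χ (m p)) ^ padicValNat p n := by
  classical
  intro n hn
  set N := h * lam with hNdef
  have hN0 : N ≠ 0 := by positivity
  have hn0 : n ≠ 0 := by omega
  set P := N.primeFactors with hPdef
  set v : ℕ → ℕ := fun p => padicValNat p n with hvdef
  set α : ℕ → ℕ := fun p => padicValNat p N with hαdef
  have hPp : ∀ p ∈ P, p.Prime := fun p hp => Nat.prime_of_mem_primeFactors hp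
  -- pairwise coprimality of the prime powers p^(v p)
  have hpaircop : ∀ p ∈ P, ∀ q ∈ P, p ≠ q → Nat.Coprime (p ^ v p) (q ^ v q) :=
    fun p hp q hq hpq =>
      Nat.Coprime.pow _ _ ((Nat.coprime_primes (hPp p hp) (hPp q hq)).mpr hpq)
  set Q := ∏ p ∈ P, p ^ v p with hQdef
  have hQdvd : Q ∣ n :=
    prod_dvd_nat P _ n hpaircop (fun p _ => pow_padicValNat_dvd)
  obtain ⟨u, hu⟩ := hQdvd
  have hu0 : u ≠ 0 := by
    intro h0; rw [h0, mul_zero] at hu; exact hn0 hu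
  -- R p: the complementary product
  set R : ℕ → ℕ := fun p => ∏ q ∈ P.erase p, q ^ v q with hRdef
  have hQR : ∀ p ∈ P, Q = p ^ v p * R p := fun p hp =>
    (Finset.mul_prod_erase P _ hp).symm
  have hnsplit : ∀ p ∈ P, n = p ^ v p * (R p * u) := by
    intro p hp
    rw [hu, hQR p hp, mul_assoc]
  have hRu0 : ∀ p ∈ P, R p * u ≠ 0 := by
    intro p hp h0
    rw [hnsplit p hp, h0, mul_zero] at hn0
    exact hn0 rfl
  have hdivp : ∀ p ∈ P, n / p ^ v p = R p * u := by
    intro p hp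
    rw [hnsplit p hp, Nat.mul_div_cancel_left _ (pow_pos (hPp p hp).pos _)]
  -- p does not divide R p * u
  have hnotdvd : ∀ p ∈ P, ¬ p ∣ (R p * u) := by
    intro p hp
    haveI : Fact p.Prime := ⟨hPp p hp⟩
    have hval : padicValNat p n = v p + padicValNat p (R p * u) := by
      conv_lhs => rw [hnsplit p hp]
      rw [padicValNat.mul (pow_ne_zero _ (hPp p hp).pos.ne') (hRu0 p hp),
        padicValNat.prime_pow]
    have h0 : padicValNat p (R p * u) = 0 := by
      have : padicValNat p n = v p := rfl
      omega
    rcases padicValNat.eq_zero_iff.mp h0 with h1 | h2 | h3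
    · exact absurd h1 (hPp p hp).ne_one
    · exact absurd h2 (hRu0 p hp)
    · exact h3
  have hnotdvdu : ∀ p ∈ P, ¬ p ∣ u := by
    intro p hp hdu
    exact hnotdvd p hp (hdu.mul_left (R p))
  -- u is coprime to N
  have hucop : Nat.Coprime u N := by
    by_contra hcon
    obtain ⟨p, hpprime, hpdvd⟩ := Nat.exists_prime_and_dvd hcon
    have hpu : p ∣ u := hpdvd.trans (Nat.gcd_dvd_left u N)
    have hpN : p ∣ N := hpdvd.trans (Nat.gcd_dvd_right u N)
    exact hnotdvdu p (Nat.mem_primeFactors.mpr ⟨hpprime, hpN, hN0⟩) hpu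
  have hu1 : 1 ≤ u := Nat.one_le_iff_ne_zero.mpr hu0
  -- u coprime to each p^(v p), hence to Q
  have hucopQ : Nat.Coprime u Q :=
    Nat.Coprime.prod_right fun p hp =>
      Nat.Coprime.pow_right _
        (((Nat.Prime.coprime_iff_not_dvd (hPp p hp)).mpr (hnotdvdu p hp)).symm)
  have hQ1 : 1 ≤ Q :=
    Finset.one_le_prod' fun p hp => pow_pos (hPp p hp).pos _
  -- LHS computation
  have hauval : a u = ∏ p ∈ P, χp p u := by
    rw [haχ u hu1 hucop, hprod]
  have hLHS : a n = (∏ p ∈ P, χp p u) * ∏ p ∈ P, a (p ^ v p) := by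
    rw [hu, ha.2 Q u hQ1 hu1 hucopQ.symm,
      mult_prod ha P _ (fun p hp => pow_pos (hPp p hp).pos _) hpaircop, hauval,
      mul_comm]
  -- χ (m p) = ∏_{q ∈ P.erase p} χq q p,  and it's nonzero
  have hαdvd : ∀ p ∈ P, ∀ q ∈ P.erase p, q ^ α q ∣ N / p ^ α p := by
    intro p hp q hq
    obtain ⟨hqp, hqP⟩ := Finset.mem_erase.mp hq
    have hcopqp : Nat.Coprime (q ^ α q) (p ^ α p) :=
      Nat.Coprime.pow _ _ ((Nat.coprime_primes (hPp q hqP) (hPp p hp)).mpr hqp)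
    have hNsplit : (N / p ^ α p) * p ^ α p = N :=
      Nat.div_mul_cancel pow_padicValNat_dvd
    exact hcopqp.dvd_of_dvd_mul_right (by rw [hNsplit]; exact pow_padicValNat_dvd)
  have hχm : ∀ p ∈ P, χ (m p) = ∏ q ∈ P.erase p, χp q p := by
    intro p hp
    rw [hprod, ← Finset.mul_prod_erase P _ hp,
      dchar_modeq (hχp p hp) (hm p hp).1, dchar_one (hχp p hp), one_mul]
    exact Finset.prod_congr rfl fun q hq =>
      dchar_modeq (hχp q (Finset.mem_of_mem_erase hq))
        (((hm p hp).2).of_dvd (hαdvd p hp q hq))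
  have hχqp_ne : ∀ p ∈ P, ∀ q ∈ P.erase p, χp q p ≠ 0 := by
    intro p hp q hq h0
    obtain ⟨hqp, hqP⟩ := Finset.mem_erase.mp hq
    have h1 : 1 < Nat.gcd p (q ^ padicValNat q N) := ((hχp q hqP).2.2 p).mp h0
    have hgcd : Nat.gcd p (q ^ padicValNat q N) = 1 :=
      Nat.Coprime.pow_right _ ((Nat.coprime_primes (hPp p hp) (hPp q hqP)).mpr hqp.symm)
    omega
  -- Rewrite each RHS term
  have hterm : ∀ p ∈ P,
      χp p (n / p ^ v p) * a (p ^ v p) / (χ (m p)) ^ v p =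
      χp p u * (∏ q ∈ P.erase p, (χp p q) ^ v q) * a (p ^ v p) /
        ∏ q ∈ P.erase p, (χp q p) ^ v p := by
    intro p hp
    rw [hdivp p hp, (hχp p hp).2.1, dchar_prod (hχp p hp), hχm p hp, ← Finset.prod_pow]
    have hpw : ∏ i ∈ P.erase p, χp p (i ^ v i) = ∏ q ∈ P.erase p, (χp p q) ^ v q :=
      Finset.prod_congr rfl fun q _ => dchar_pow (hχp p hp) q (v q)
    rw [hpw]
    ring
  rw [Finset.prod_congr rfl hterm]
  -- Split the product of quotients
  rw [Finset.prod_div_distrib, Finset.prod_mul_distrib, Finset.prod_mul_distrib]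
  -- The two double products are equal
  have hXY : (∏ p ∈ P, ∏ q ∈ P.erase p, (χp p q) ^ v q) =
      ∏ p ∈ P, ∏ q ∈ P.erase p, (χp q p) ^ v p := by
    rw [Finset.prod_comm' (t := fun p => P.erase p) (t' := P) (s' := fun q => P.erase q)
      (by intro x y; simp only [Finset.mem_erase]; tauto)]
  have hYne : (∏ p ∈ P, ∏ q ∈ P.erase p, (χp q p) ^ v p) ≠ 0 := by
    apply Finset.prod_ne_zero_iff.mpr
    intro p hp
    apply Finset.prod_ne_zero_iff.mpr
    intro q hq
    exact pow_ne_zero _ (hχqp_ne p hp q hq)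
  rw [hXY, hLHS]
  field_simp
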